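/- Let α ∈ F_{q^{mn}} with F_q(α) = F_{q^{mn}}, and let N(α,m,n;q) be the number of m-tuples (v_1,...,v_m) such that (v_1,...,v_m, αv_1,...,αv_m, ..., α^{n-1}v_1,...,α^{n-1}v_m) is an F_q-basis of F_{q^{mn}}. Then ((q-2)q^{mn}+1)/(q-1) · q^{mn(m-1)} ≤ N(α,m,n;q) ≤ ∏_{i=0}^{m-1}(q^{mn} - q^i). -/

import Mathlib

open Polynomial

/-- ((q-2)q^{mn}+1)/(q-1) · q^{mn(m-1)} ≤ N(α,m,n;q)
≤ ∏_{i=0}^{m-1}(q^{mn} - q^i); the lower bound is stated multiplied by (q-1). -/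
theorem stmt_16 (F : Type*) [Field F] [Fintype F] (q : ℕ) (hq : q = Fintype.card F)
    (m n : ℕ) (hm : 0 < m) (hn : 0 < n)
    (K : Type*) [Field K] [Algebra F K] [FiniteDimensional F K]
    (hK : Module.finrank F K = m * n)
    (α : K) (hα : Algebra.adjoin F {α} = ⊤) :
    ((q - 2) * q ^ (m * n) + 1) * q ^ (m * n * (m - 1)) ≤
        (q - 1) * Nat.card {v : Fin m → K //
            ∃ b : Module.Basis (Fin n × Fin m) F K,
              ∀ p : Fin n × Fin m, b p = α ^ (p.1 : ℕ) * v p.2} ∧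
      Nat.card {v : Fin m → K //
          ∃ b : Module.Basis (Fin n × Fin m) F K,
            ∀ p : Fin n × Fin m, b p = α ^ (p.1 : ℕ) * v p.2} ≤
        ∏ i ∈ Finset.range m, (q ^ (m * n) - q ^ i) := by
  classical
  have hq2 : 2 ≤ q := by rw [hq]; exact Fintype.one_lt_card
  have hfinK : Finite K := Module.finite_of_finite F
  letI : Fintype K := Fintype.ofFinite K
  have hfinD : Finite (Module.Dual F K) :=
    Finite.of_injective (fun φ : Module.Dual F K => (φ : K → F)) DFunLike.coe_injective
  letI : Fintype (Module.Dual F K) := Fintype.ofFinite _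
  have hcardK : Fintype.card K = q ^ (m * n) := by
    rw [hq, Module.card_eq_pow_finrank (K := F), hK]
  set fam : (Fin m → K) → (Fin n × Fin m) → K := fun v p => α ^ (p.1 : ℕ) * v p.2 with hfam
  have hcardIdx : Fintype.card (Fin n × Fin m) = Module.finrank F K := by
    simp [hK, mul_comm]
  -- characterization of the basis condition by spanning
  have hchar : ∀ v : Fin m → K,
      (∃ b : Module.Basis (Fin n × Fin m) F K, ∀ p : Fin n × Fin m, b p = α ^ (p.1 : ℕ) * v p.2) ↔
      Submodule.span F (Set.range (fam v)) = ⊤ := by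
    intro v
    constructor
    · rintro ⟨b, hb⟩
      have hb' : ⇑b = fam v := funext hb
      rw [← hb']; exact b.span_eq
    · intro hspan
      refine ⟨basisOfTopLeSpanOfCardEqFinrank (fam v) hspan.ge hcardIdx, fun p => ?_⟩
      rw [coe_basisOfTopLeSpanOfCardEqFinrank]
  -- the cardinality of the subtype as a finset count
  set Ss : Finset (Fin m → K) :=
    Finset.univ.filter (fun v => Submodule.span F (Set.range (fam v)) = ⊤) with hSs
  have hNS : Nat.card {v : Fin m → K //
      ∃ b : Module.Basis (Fin n × Fin m) F K,
        ∀ p : Fin n × Fin m, b p = α ^ (p.1 : ℕ) * v p.2} = Ss.card := by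
    rw [Nat.card_eq_fintype_card, Fintype.card_subtype]
    congr 1
    exact Finset.filter_congr (fun v _ => hchar v)
  -- minimal polynomial of α has degree m*n
  have hint : IsIntegral F α := .of_finite F α
  have htop : IntermediateField.adjoin F {α} = ⊤ := by
    apply IntermediateField.toSubalgebra_injective
    rw [IntermediateField.adjoin_simple_toSubalgebra_of_isAlgebraic hint.isAlgebraic, hα,
      IntermediateField.top_toSubalgebra]
  have hdeg : (minpoly F α).natDegree = m * n := by
    rw [← IntermediateField.adjoin.finrank hint, htop,
      IntermediateField.finrank_top', hK]
  -- linear independence of small powers of α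
  have hpow : LinearIndependent F (fun i : Fin n => α ^ (i : ℕ)) := by
    have h := linearIndependent_pow (K := F) α
    have hle : n ≤ (minpoly F α).natDegree := by
      rw [hdeg]; exact Nat.le_mul_of_pos_left n hm
    have hcomp := h.comp (Fin.castLE hle) (Fin.castLE_injective hle)
    have : (fun i : Fin (minpoly F α).natDegree => α ^ (i : ℕ)) ∘ Fin.castLE hle
        = fun i : Fin n => α ^ (i : ℕ) := by
      funext i; simp
    rwa [this] at hcomp
  -- for each nonzero functional φ, the space of vectors killed by all φ(αⁱ·) has q^(mn-n) elems
  have hW : ∀ φ : Module.Dual F K, φ ≠ 0 →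
      Nat.card {x : K // ∀ i : Fin n, φ (α ^ (i : ℕ) * x) = 0} = q ^ (m * n - n) := by
    intro φ hφ
    set L : K →ₗ[F] (Fin n → F) :=
      LinearMap.pi (fun i : Fin n => φ ∘ₗ LinearMap.mulLeft F (α ^ (i : ℕ))) with hL
    have hker : ∀ x : K, (∀ i : Fin n, φ (α ^ (i : ℕ) * x) = 0) ↔ x ∈ LinearMap.ker L := by
      intro x
      simp [hL, LinearMap.mem_ker, funext_iff, LinearMap.pi_apply]
    have hsurj : LinearMap.range L = ⊤ := by
      by_contra hne
      obtain ⟨ψ, hψ0, hψ⟩ := Submodule.exists_dual_map_eq_bot_of_lt_top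
        (lt_top_iff_ne_top.2 hne) inferInstance
      have hkill : ∀ x : K, ψ (L x) = 0 := by
        intro x
        have hmem : ψ (L x) ∈ (LinearMap.range L).map ψ :=
          Submodule.mem_map_of_mem ⟨x, rfl⟩
        rw [hψ] at hmem
        exact (Submodule.mem_bot F).1 hmem
      set c : Fin n → F := fun i => ψ (fun j => if i = j then 1 else 0) with hc
      have hy : ∀ y : Fin n → F, ψ y = ∑ i : Fin n, y i * c i := by
        intro y
        conv_lhs => rw [pi_eq_sum_univ y]
        rw [map_sum]
        exact Finset.sum_congr rfl (fun i _ => by rw [map_smul, smul_eq_mul, hc])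
      set β : K := ∑ i : Fin n, c i • α ^ (i : ℕ) with hβ
      have hβkill : ∀ x : K, φ (β * x) = 0 := by
        intro x
        have h1 := hkill x
        rw [hy] at h1
        have : φ (β * x) = ∑ i : Fin n, (L x) i * c i := by
          rw [hβ, Finset.sum_mul, map_sum]
          refine Finset.sum_congr rfl (fun i _ => ?_)
          rw [smul_mul_assoc, map_smul, smul_eq_mul, mul_comm]
          simp [hL, LinearMap.pi_apply]
        rw [this, h1]
      by_cases hβ0 : β = 0
      · -- powers independent ⇒ c = 0 ⇒ ψ = 0
        have hcz : ∀ i : Fin n, c i = 0 := by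
          have := Fintype.linearIndependent_iff.1 hpow c (by rw [← hβ, hβ0])
          exact this
        apply hψ0
        apply LinearMap.ext
        intro y
        rw [hy]
        simp [hcz]
      · -- β ≠ 0 ⇒ φ = 0
        apply hφ
        apply LinearMap.ext
        intro x
        have := hβkill (β⁻¹ * x)
        rwa [← mul_assoc, mul_inv_cancel₀ hβ0, one_mul] at this
    have hrank := LinearMap.finrank_range_add_finrank_ker L
    rw [hsurj, finrank_top, Module.finrank_pi, hK] at hrank
    have hdim : Module.finrank F (LinearMap.ker L) = m * n - n := by
      simp only [Fintype.card_fin] at hrank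
      rw [← hrank, Nat.add_sub_cancel_left]
    have : Nat.card {x : K // ∀ i : Fin n, φ (α ^ (i : ℕ) * x) = 0}
        = Nat.card (LinearMap.ker L) :=
      Nat.card_congr (Equiv.subtypeEquivRight hker)
    rw [this, Nat.card_eq_fintype_card, Module.card_eq_pow_finrank (K := F), hdim, hq]
  -- Finsets for counting
  set Φ : Finset (Module.Dual F K) := Finset.univ.filter (fun φ => φ ≠ 0) with hΦ
  set Bs : Finset (Fin m → K) :=
    Finset.univ.filter (fun v => ¬ Submodule.span F (Set.range (fam v)) = ⊤) with hBs
  have hΦcard : Φ.card = q ^ (m * n) - 1 := by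
    rw [hΦ, Finset.filter_ne', Finset.card_erase_of_mem (Finset.mem_univ _),
      Finset.card_univ, ← Nat.card_eq_fintype_card, Nat.card_eq_fintype_card,
      Module.card_eq_pow_finrank (K := F) (V := Module.Dual F K), Subspace.dual_finrank_eq, hK, hq]
  -- cardinality of killed tuples for a fixed φ
  have hAcard : ∀ φ : Module.Dual F K, φ ≠ 0 →
      (Finset.univ.filter
        (fun v : Fin m → K => ∀ p : Fin n × Fin m, φ (fam v p) = 0)).card
        = q ^ (m * n * (m - 1)) := by
    intro φ hφ
    rw [← Fintype.card_subtype, ← Nat.card_eq_fintype_card]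
    have e : {v : Fin m → K // ∀ p : Fin n × Fin m, φ (fam v p) = 0}
        ≃ (Fin m → {x : K // ∀ i : Fin n, φ (α ^ (i : ℕ) * x) = 0}) := by
      refine (Equiv.subtypeEquivRight ?_).trans (Equiv.subtypePiEquivPi)
      intro v
      constructor
      · intro h j i; exact h (i, j)
      · intro h p; exact h p.2 p.1
    rw [Nat.card_congr e, Nat.card_pi]
    rw [Finset.prod_const, hW φ hφ, Finset.card_univ, Fintype.card_fin, ← pow_mul]
    congr 1
    have h1 : n ≤ m * n := Nat.le_mul_of_pos_left n hm
    have h2 : 1 ≤ m := hm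
    zify [h1, h2]
    ring
  -- each non-spanning tuple is killed by at least q-1 nonzero functionals
  have hkey1 : ∀ v ∈ Bs, q - 1 ≤ (Φ.filter (fun φ => ∀ p : Fin n × Fin m, φ (fam v p) = 0)).card := by
    intro v hv
    rw [hBs, Finset.mem_filter] at hv
    obtain ⟨φ₀, hφ₀ne, hmap⟩ := Submodule.exists_dual_map_eq_bot_of_lt_top
      (lt_top_iff_ne_top.2 hv.2) inferInstance
    have hkills : ∀ p : Fin n × Fin m, φ₀ (fam v p) = 0 := by
      intro p
      have hmem : φ₀ (fam v p) ∈ (Submodule.span F (Set.range (fam v))).map φ₀ :=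
        Submodule.mem_map_of_mem (Submodule.subset_span (Set.mem_range_self p))
      rw [hmap] at hmem
      exact (Submodule.mem_bot F).1 hmem
    have hcard0 : (Finset.univ.erase (0 : F)).card = q - 1 := by
      rw [Finset.card_erase_of_mem (Finset.mem_univ _), Finset.card_univ, hq]
    rw [← hcard0]
    apply Finset.card_le_card_of_injOn (fun c : F => c • φ₀)
    · intro c hc
      rw [Finset.mem_coe, Finset.mem_erase] at hc
      rw [Finset.mem_coe, Finset.mem_filter, hΦ, Finset.mem_filter]
      refine ⟨⟨Finset.mem_univ _, smul_ne_zero hc.1 hφ₀ne⟩, fun p => ?_⟩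
      rw [LinearMap.smul_apply, hkills p, smul_zero]
    · exact Set.injOn_of_injective (smul_left_injective F hφ₀ne)
  -- double counting
  have hcount : (q - 1) * Bs.card ≤ (q ^ (m * n) - 1) * q ^ (m * n * (m - 1)) := by
    calc (q - 1) * Bs.card = ∑ _v ∈ Bs, (q - 1) := by
          rw [Finset.sum_const, smul_eq_mul, mul_comm]
      _ ≤ ∑ v ∈ Bs, (Φ.filter (fun φ => ∀ p : Fin n × Fin m, φ (fam v p) = 0)).card :=
          Finset.sum_le_sum hkey1
      _ = ∑ φ ∈ Φ, (Bs.filter (fun v => ∀ p : Fin n × Fin m, φ (fam v p) = 0)).card := by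
          simp_rw [Finset.card_filter]
          exact Finset.sum_comm
      _ ≤ ∑ _φ ∈ Φ, q ^ (m * n * (m - 1)) := by
          refine Finset.sum_le_sum (fun φ hφ => ?_)
          rw [hΦ, Finset.mem_filter] at hφ
          rw [← hAcard φ hφ.2]
          exact Finset.card_le_card (fun v hv => by
            rw [Finset.mem_filter] at hv ⊢
            exact ⟨Finset.mem_univ _, hv.2⟩)
      _ = (q ^ (m * n) - 1) * q ^ (m * n * (m - 1)) := by
          rw [Finset.sum_const, smul_eq_mul, hΦcard]
  -- splitting the total count
  have hsplit : Ss.card + Bs.card = q ^ (m * n * m) := by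
    rw [hSs, hBs, Finset.card_filter_add_card_filter_not, Finset.card_univ,
      Fintype.card_fun, hcardK, Fintype.card_fin, ← pow_mul]
  constructor
  · -- lower bound
    rw [hNS]
    have hexp : m * n + m * n * (m - 1) = m * n * m := by
      calc m * n + m * n * (m - 1) = m * n * (1 + (m - 1)) := by ring
        _ = m * n * m := by rw [Nat.add_sub_cancel' hm]
    have hab : q ^ (m * n) * q ^ (m * n * (m - 1)) = q ^ (m * n * m) := by
      rw [← pow_add, hexp]
    set a := q ^ (m * n) with ha'
    set b := q ^ (m * n * (m - 1)) with hb'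
    have ha : 1 ≤ a := Nat.one_le_pow _ _ (Nat.lt_of_lt_of_le Nat.zero_lt_two hq2)
    have hkey : ((q - 2) * a + 1) * b + (a - 1) * b = (q - 1) * (a * b) := by
      obtain ⟨q', rfl⟩ : ∃ q', q = q' + 2 := ⟨q - 2, (Nat.sub_add_cancel hq2).symm⟩
      obtain ⟨a', haa⟩ : ∃ a', a = a' + 1 := ⟨a - 1, (Nat.sub_add_cancel ha).symm⟩
      rw [haa]
      simp only [Nat.add_sub_cancel, show q' + 2 - 2 = q' from rfl,
        show q' + 2 - 1 = q' + 1 from rfl]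
      ring
    have h3 : ((q - 2) * a + 1) * b + (q - 1) * Bs.card
        ≤ (q - 1) * Ss.card + (q - 1) * Bs.card := by
      calc ((q - 2) * a + 1) * b + (q - 1) * Bs.card
          ≤ ((q - 2) * a + 1) * b + (a - 1) * b := by
            exact Nat.add_le_add_left hcount _
        _ = (q - 1) * (a * b) := hkey
        _ = (q - 1) * (Ss.card + Bs.card) := by rw [hab, ← hsplit]
        _ = (q - 1) * Ss.card + (q - 1) * Bs.card := by ring
    exact Nat.le_of_add_le_add_right h3
  · -- upper bound
    have hinj : ∀ v : Fin m → K,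
        (∃ b : Module.Basis (Fin n × Fin m) F K,
          ∀ p : Fin n × Fin m, b p = α ^ (p.1 : ℕ) * v p.2) → LinearIndependent F v := by
      rintro v ⟨b, hb⟩
      have hb' : ⇑b = fam v := funext hb
      have hli : LinearIndependent F (fam v) := hb' ▸ b.linearIndependent
      have hcomp := hli.comp (fun j : Fin m => ((⟨0, hn⟩ : Fin n), j))
        (fun a b h => (Prod.mk.injEq _ _ _ _ ▸ h).2)
      have : (fam v) ∘ (fun j : Fin m => ((⟨0, hn⟩ : Fin n), j)) = v := by
        funext j; simp [hfam]
      rwa [this] at hcomp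
    have hle := Nat.card_le_card_of_injective
      (f := fun v : {v : Fin m → K //
          ∃ b : Module.Basis (Fin n × Fin m) F K,
            ∀ p : Fin n × Fin m, b p = α ^ (p.1 : ℕ) * v p.2} =>
        (⟨v.1, hinj v.1 v.2⟩ : {v : Fin m → K // LinearIndependent F v}))
      (fun a b h => by
        apply Subtype.ext
        have := congrArg Subtype.val h
        simpa using this)
    have hcard := card_linearIndependent (K := F) (V := K) (k := m)
      (by rw [hK]; exact Nat.le_mul_of_pos_right m hn)
    rw [hcard] at hle
    refine hle.trans (le_of_eq ?_)
    rw [Fin.prod_univ_eq_prod_range (fun i => Fintype.card F ^ Module.finrank F K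
      - Fintype.card F ^ i) m]
    exact Finset.prod_congr rfl (fun i _ => by rw [hK, hq])
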